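/- Let 0 < K₁ ≤ K₂ and let b̂₁, b̂₂ ≥ 0. For i = 1, 2 let V_i : [0,∞) → ℝ be continuous, continuously differentiable on (0,∞), twice continuously differentiable on (0,∞)∖{b̂₁,b̂₂}, and concave, and assume: V_i(0) = 0; V_i(x) → K_i/r as x → ∞; V_i'(x) > 1 for 0 < x < b̂_i; V_i'(b̂_i) = 1 if b̂_i > 0; V_i'(x) < 1 for x > b̂_i; and ½σ(x)²V_i''(x) + (μ(x) − K₁·𝟙_{x≥b̂₁} − K₂·𝟙_{x≥b̂₂})·V_i'(x) − r·V_i(x) + K_i·𝟙_{x≥b̂_i} = 0 for all x ∈ (0,∞)∖{b̂₁,b̂₂}. Assume moreover that if m := min(b̂₁,b̂₂) > 0 then there exist a function ψ : [0,m] → ℝ with ψ(x) > 0 and ψ'(x) > 0 for 0 < x ≤ m, and constants A₁, A₂ > 0, such that V_i = A_i·ψ on [0,m] for i = 1,2. Then b̂₁ ≤ b̂₂. -/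

import Mathlib

open Set Filter Topology

private lemma second_deriv_nonpos_of_isLocalMax {f : ℝ → ℝ} {a : ℝ}
    (hdiff : ∀ᶠ x in 𝓝 a, DifferentiableAt ℝ f x)
    (hmax : IsLocalMax f a)
    (h2 : DifferentiableAt ℝ (deriv f) a) :
    deriv (deriv f) a ≤ 0 := by
  by_contra hpos
  push_neg at hpos
  have hfa : deriv f a = 0 := hmax.deriv_eq_zero
  have hslope : Tendsto (slope (deriv f) a) (𝓝[≠] a) (𝓝 (deriv (deriv f) a)) :=
    hasDerivAt_iff_tendsto_slope.1 h2.hasDerivAt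
  have h1 : ∀ᶠ x in 𝓝[≠] a, 0 < slope (deriv f) a x :=
    hslope.eventually (eventually_gt_nhds hpos)
  have h1' : ∀ᶠ x in 𝓝[<] a, 0 < slope (deriv f) a x :=
    h1.filter_mono (nhdsWithin_mono a fun x hx => ne_of_lt hx)
  have h2' : ∀ᶠ x in 𝓝[<] a, deriv f x < 0 := by
    filter_upwards [h1', self_mem_nhdsWithin] with x hs hxa
    have hxa' : x < a := hxa
    rw [slope_def_field, hfa] at hs
    rcases div_pos_iff.1 hs with ⟨hn, hd⟩ | ⟨hn, hd⟩
    · linarith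
    · linarith
  obtain ⟨l, hl, hsub⟩ := mem_nhdsLT_iff_exists_Ioo_subset.1 h2'
  have hla : l < a := hl
  have hmax' : ∀ᶠ x in 𝓝 a, f x ≤ f a := hmax
  obtain ⟨ε, hε, hball⟩ := Metric.eventually_nhds_iff_ball.1 (hmax'.and hdiff)
  set δ := min (a - l) ε with hδ
  have hδpos : 0 < δ := lt_min (sub_pos.2 hla) hε
  have hδl : δ ≤ a - l := min_le_left _ _
  have hδε : δ ≤ ε := min_le_right _ _
  set q := a - δ / 2 with hq
  have hqa : q < a := by rw [hq]; linarith
  have hql : l < q := by rw [hq]; linarith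
  have hballq : ∀ x ∈ Icc q a, x ∈ Metric.ball a ε := by
    intro x hx
    rw [Metric.mem_ball, Real.dist_eq, abs_lt]
    constructor
    · have := hx.1; rw [hq] at this; linarith
    · linarith [hx.2]
  have hanti : StrictAntiOn f (Icc q a) := by
    apply strictAntiOn_of_deriv_neg (convex_Icc q a)
    · intro x hx
      exact ((hball x (hballq x hx)).2).continuousAt.continuousWithinAt
    · intro x hx
      rw [interior_Icc] at hx
      exact hsub ⟨hql.trans hx.1, hx.2⟩
  have h3 : f a < f q := hanti ⟨le_rfl, hqa.le⟩ ⟨hqa.le, le_rfl⟩ hqa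
  have h4 : f q ≤ f a := (hball q (hballq q ⟨le_rfl, hqa.le⟩)).1
  linarith

/-- threshold-ordering in the asymmetric game: if the maximal extraction
rates satisfy 0 < K₁ ≤ K₂ and V₁, V₂ are candidate equilibrium value functions of
threshold type with thresholds b̂₁, b̂₂, then b̂₁ ≤ b̂₂.  Here the indices are 0, 1. -/
theorem stmt_5
    (r : ℝ) (hr : 0 < r)
    (μ σ : ℝ → ℝ) (hμ : Continuous μ) (hσ : Continuous σ)
    (K b : Fin 2 → ℝ) (V : Fin 2 → ℝ → ℝ)
    (hKpos : 0 < K 0) (hKord : K 0 ≤ K 1)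
    (hbnn : ∀ i, 0 ≤ b i)
    (hcont : ∀ i, ContinuousOn (V i) (Ici (0:ℝ)))
    (hC1 : ∀ i, ContDiffOn ℝ 1 (V i) (Ioi (0:ℝ)))
    (hC2 : ∀ i, ContDiffOn ℝ 2 (V i) (Ioi (0:ℝ) \ {b 0, b 1}))
    (hconc : ∀ i, ConcaveOn ℝ (Ici (0:ℝ)) (V i))
    (h0 : ∀ i, V i 0 = 0)
    (hlim : ∀ i, Tendsto (V i) atTop (nhds (K i / r)))
    (hd_gt : ∀ i, ∀ x, 0 < x → x < b i → 1 < deriv (V i) x)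
    (hd_eq : ∀ i, 0 < b i → deriv (V i) (b i) = 1)
    (hd_lt : ∀ i, ∀ x, b i < x → deriv (V i) x < 1)
    (hODE : ∀ i, ∀ x, 0 < x → x ≠ b 0 → x ≠ b 1 →
      (1/2) * σ x ^ 2 * deriv (deriv (V i)) x
        + (μ x - K 0 * (if b 0 ≤ x then 1 else 0) - K 1 * (if b 1 ≤ x then 1 else 0))
            * deriv (V i) x
        - r * V i x + K i * (if b i ≤ x then 1 else 0) = 0)
    (hpsi : 0 < min (b 0) (b 1) → ∃ (ψ : ℝ → ℝ) (A : Fin 2 → ℝ),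
      (∀ x, 0 < x → x ≤ min (b 0) (b 1) → 0 < ψ x ∧ 0 < deriv ψ x) ∧
      (∀ i, 0 < A i) ∧
      (∀ i, ∀ x, 0 ≤ x → x ≤ min (b 0) (b 1) → V i x = A i * ψ x)) :
    b 0 ≤ b 1 := by
  by_contra hcon
  push_neg at hcon
  have hb1nn : 0 ≤ b 1 := hbnn 1
  have hb0pos : 0 < b 0 := lt_of_le_of_lt hb1nn hcon
  obtain ⟨W, hWdef⟩ : ∃ W : ℝ → ℝ, W = fun x => V 0 x - V 1 x := ⟨_, rfl⟩
  have hVd : ∀ i, ∀ x : ℝ, 0 < x → DifferentiableAt ℝ (V i) x := fun i x hx =>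
    ((hC1 i).differentiableOn one_ne_zero).differentiableAt (isOpen_Ioi.mem_nhds hx)
  have hWd : ∀ x : ℝ, 0 < x → DifferentiableAt ℝ W x := by
    intro x hx
    rw [hWdef]
    exact (hVd 0 x hx).sub (hVd 1 x hx)
  have hWderiv : ∀ x : ℝ, 0 < x → deriv W x = deriv (V 0) x - deriv (V 1) x := by
    intro x hx
    rw [hWdef]
    exact deriv_sub (hVd 0 x hx) (hVd 1 x hx)
  have hdc : ∀ i, ContinuousOn (deriv (V i)) (Ioi (0:ℝ)) := fun i =>
    (hC1 i).continuousOn_deriv_of_isOpen isOpen_Ioi le_rfl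
  -- Step 1 : 0 ≤ W (b 1)
  have hWb1 : 0 ≤ W (b 1) := by
    rcases eq_or_lt_of_le hb1nn with h | hb1pos
    · simp [hWdef, ← h, h0 0, h0 1]
    · have hmin : min (b 0) (b 1) = b 1 := min_eq_right hcon.le
      obtain ⟨ψ, A, hψ, hA, hVA⟩ := hpsi (by rw [hmin]; exact hb1pos)
      have hder : ∀ i, ∀ x ∈ Ioo (0:ℝ) (b 1), deriv (V i) x = A i * deriv ψ x := by
        intro i x hx
        have hev : V i =ᶠ[𝓝 x] fun y => A i * ψ y := by
          filter_upwards [Ioo_mem_nhds hx.1 hx.2] with y hy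
          exact hVA i y hy.1.le (by rw [hmin]; exact hy.2.le)
        rw [hev.deriv_eq, deriv_const_mul_field]
      set F : ℝ → ℝ := fun x => A 1 * deriv (V 0) x - A 0 * deriv (V 1) x with hF
      have hFc : ContinuousOn F (Ioi (0:ℝ)) :=
        (continuousOn_const.mul (hdc 0)).sub (continuousOn_const.mul (hdc 1))
      have hF0 : ∀ x ∈ Ioo (0:ℝ) (b 1), F x = 0 := by
        intro x hx
        simp only [hF, hder 0 x hx, hder 1 x hx]
        ring
      have hne : (𝓝[Ioo (0:ℝ) (b 1)] (b 1)).NeBot := by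
        rw [← mem_closure_iff_nhdsWithin_neBot, closure_Ioo (ne_of_lt hb1pos)]
        exact ⟨hb1pos.le, le_rfl⟩
      have t1 : Tendsto F (𝓝[Ioo (0:ℝ) (b 1)] (b 1)) (𝓝 (F (b 1))) :=
        (hFc (b 1) hb1pos).mono_left (nhdsWithin_mono _ Ioo_subset_Ioi_self)
      have t2 : Tendsto F (𝓝[Ioo (0:ℝ) (b 1)] (b 1)) (𝓝 0) := by
        refine tendsto_const_nhds.congr' ?_
        filter_upwards [self_mem_nhdsWithin] with x hx
        exact (hF0 x hx).symm
      have hFb1 : F (b 1) = 0 := tendsto_nhds_unique t1 t2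
      have hd1 : deriv (V 1) (b 1) = 1 := hd_eq 1 hb1pos
      have hd0 : 1 < deriv (V 0) (b 1) := hd_gt 0 (b 1) hb1pos hcon
      have hA01 : A 0 = A 1 * deriv (V 0) (b 1) := by
        simp only [hF, hd1, mul_one] at hFb1
        linarith
      have hA_lt : A 1 < A 0 := by
        calc A 1 = A 1 * 1 := (mul_one _).symm
        _ < A 1 * deriv (V 0) (b 1) := mul_lt_mul_of_pos_left hd0 (hA 1)
        _ = A 0 := hA01.symm
      have hψpos : 0 < ψ (b 1) := (hψ (b 1) hb1pos hmin.ge).1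
      have hV0b1 : V 0 (b 1) = A 0 * ψ (b 1) := hVA 0 (b 1) hb1pos.le hmin.ge
      have hV1b1 : V 1 (b 1) = A 1 * ψ (b 1) := hVA 1 (b 1) hb1pos.le hmin.ge
      have hpos : 0 < W (b 1) := by
        simp only [hWdef, hV0b1, hV1b1]
        nlinarith
      exact hpos.le
  -- Step 2/3 : 0 < W (b 0)
  have hWcont : ContinuousOn W (Ici (0:ℝ)) := by
    rw [hWdef]
    exact (hcont 0).sub (hcont 1)
  have hderivWpos : ∀ x ∈ Ioo (b 1) (b 0), 0 < deriv W x := by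
    intro x hx
    have hxpos : 0 < x := lt_of_le_of_lt hb1nn hx.1
    rw [hWderiv x hxpos]
    have h1 := hd_gt 0 x hxpos hx.2
    have h2 := hd_lt 1 x hx.1
    linarith
  have hmono1 : StrictMonoOn W (Icc (b 1) (b 0)) := by
    apply strictMonoOn_of_deriv_pos (convex_Icc _ _)
    · exact hWcont.mono fun x hx => le_trans hb1nn hx.1
    · intro x hx
      rw [interior_Icc] at hx
      exact hderivWpos x hx
  have hWb0 : 0 < W (b 0) :=
    lt_of_le_of_lt hWb1 (hmono1 ⟨le_rfl, hcon.le⟩ ⟨hcon.le, le_rfl⟩ hcon)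
  -- Step 4 : deriv W (b 0) > 0
  have hdWb0 : 0 < deriv W (b 0) := by
    rw [hWderiv (b 0) hb0pos, hd_eq 0 hb0pos]
    linarith [hd_lt 1 (b 0) hcon]
  -- Step 5 : a point x₀ > b 0 with W (b 0) < W x₀
  have hWdc : ContinuousOn (deriv W) (Ioi (0:ℝ)) := by
    apply ContinuousOn.congr ((hdc 0).sub (hdc 1))
    intro x hx
    exact hWderiv x hx
  have hev : ∀ᶠ x in 𝓝 (b 0), 0 < deriv W x :=
    (hWdc.continuousAt (isOpen_Ioi.mem_nhds hb0pos)).eventually (eventually_gt_nhds hdWb0)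
  obtain ⟨ε, hε, hball⟩ := Metric.eventually_nhds_iff_ball.1 hev
  set x₀ := b 0 + ε / 2 with hx₀
  have hx₀gt : b 0 < x₀ := by rw [hx₀]; linarith
  have hmono2 : StrictMonoOn W (Icc (b 0) x₀) := by
    apply strictMonoOn_of_deriv_pos (convex_Icc _ _)
    · exact hWcont.mono fun x hx => le_trans hb0pos.le hx.1
    · intro x hx
      rw [interior_Icc] at hx
      apply hball
      rw [Metric.mem_ball, Real.dist_eq, abs_lt]
      have h1 := hx.1
      have h2 := hx.2
      rw [hx₀] at h2
      constructor <;> linarith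
  have hWx₀ : W (b 0) < W x₀ := hmono2 ⟨le_rfl, hx₀gt.le⟩ ⟨hx₀gt.le, le_rfl⟩ hx₀gt
  -- Step 6 : tail bound from the limits at infinity
  have hlimW : Tendsto W atTop (𝓝 (K 0 / r - K 1 / r)) := by
    rw [hWdef]
    exact (hlim 0).sub (hlim 1)
  have hKle : K 0 / r - K 1 / r < W (b 0) := by
    have h1 : K 0 / r ≤ K 1 / r := by gcongr
    linarith [hWb0, h1]
  obtain ⟨M0, hM0⟩ := eventually_atTop.1 (hlimW.eventually (eventually_lt_nhds hKle))
  set M := max M0 x₀ with hM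
  have hx₀M : x₀ ≤ M := le_max_right _ _
  have hb0M : b 0 ≤ M := hx₀gt.le.trans hx₀M
  -- Step 7 : maximum point on [b 0, M]
  obtain ⟨xs, hxs_mem, hxs_max⟩ := isCompact_Icc.exists_isMaxOn (nonempty_Icc.2 hb0M)
    (hWcont.mono fun x hx => le_trans hb0pos.le hx.1)
  have hWxs : W (b 0) < W xs := lt_of_lt_of_le hWx₀ (hxs_max ⟨hx₀gt.le, hx₀M⟩)
  have hxs_ne_b0 : b 0 < xs := by
    rcases lt_or_eq_of_le hxs_mem.1 with h | h
    · exact h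
    · rw [← h] at hWxs
      exact absurd hWxs (lt_irrefl _)
  have hxs_lt_M : xs < M := by
    rcases lt_or_eq_of_le hxs_mem.2 with h | h
    · exact h
    · have hWM : W M < W (b 0) := hM0 M (le_max_left _ _)
      rw [h] at hWxs
      linarith
  have hxs_pos : 0 < xs := hb0pos.trans hxs_ne_b0
  have hxs_gt_b1 : b 1 < xs := hcon.trans hxs_ne_b0
  have hlocmax : IsLocalMax W xs := hxs_max.isLocalMax (Icc_mem_nhds hxs_ne_b0 hxs_lt_M)
  -- second derivative data at xs
  have hS : IsOpen (Ioi (0:ℝ) \ {b 0, b 1}) :=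
    isOpen_Ioi.sdiff (Set.Finite.isClosed (Set.toFinite _))
  have hxsS : xs ∈ Ioi (0:ℝ) \ {b 0, b 1} := by
    refine ⟨hxs_pos, ?_⟩
    simp only [Set.mem_insert_iff, Set.mem_singleton_iff]
    push_neg
    exact ⟨ne_of_gt hxs_ne_b0, ne_of_gt hxs_gt_b1⟩
  have hdVd : ∀ i, DifferentiableAt ℝ (deriv (V i)) xs := fun i =>
    (((hC2 i).deriv_of_isOpen (m := 1) hS (by norm_num)).differentiableOn one_ne_zero).differentiableAt
      (hS.mem_nhds hxsS)
  have hWdev : deriv W =ᶠ[𝓝 xs] fun x => deriv (V 0) x - deriv (V 1) x := by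
    filter_upwards [isOpen_Ioi.mem_nhds hxs_pos] with y hy
    exact hWderiv y hy
  have hdWdiff : DifferentiableAt ℝ (deriv W) xs :=
    ((hdVd 0).sub (hdVd 1)).congr_of_eventuallyEq hWdev
  have hdd_eq : deriv (deriv W) xs = deriv (deriv (V 0)) xs - deriv (deriv (V 1)) xs := by
    rw [hWdev.deriv_eq]
    exact deriv_sub (hdVd 0) (hdVd 1)
  have hWdiff_ev : ∀ᶠ x in 𝓝 xs, DifferentiableAt ℝ W x := by
    filter_upwards [isOpen_Ioi.mem_nhds hxs_pos] with y hy
    exact hWd y hy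
  have hdd_nonpos : deriv (deriv W) xs ≤ 0 :=
    second_deriv_nonpos_of_isLocalMax hWdiff_ev hlocmax hdWdiff
  have hdW0 : deriv W xs = 0 := hlocmax.deriv_eq_zero
  have hd01 : deriv (V 1) xs = deriv (V 0) xs := by
    have h := hWderiv xs hxs_pos
    rw [hdW0] at h
    linarith
  -- the ODE at xs
  have hb0le : b 0 ≤ xs := hxs_ne_b0.le
  have hb1le : b 1 ≤ xs := hxs_gt_b1.le
  have e0 := hODE 0 xs hxs_pos (ne_of_gt hxs_ne_b0) (ne_of_gt hxs_gt_b1)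
  have e1 := hODE 1 xs hxs_pos (ne_of_gt hxs_ne_b0) (ne_of_gt hxs_gt_b1)
  rw [if_pos hb0le, if_pos hb1le] at e0 e1
  rw [hd01] at e1
  have hdd' : deriv (deriv (V 0)) xs ≤ deriv (deriv (V 1)) xs := by
    rw [hdd_eq] at hdd_nonpos
    linarith
  have hσ2 : (0:ℝ) ≤ (1/2) * σ xs ^ 2 := by positivity
  have hprod : (1/2) * σ xs ^ 2 * deriv (deriv (V 0)) xs
      ≤ (1/2) * σ xs ^ 2 * deriv (deriv (V 1)) xs :=
    mul_le_mul_of_nonneg_left hdd' hσ2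
  have hWxs_pos : 0 < W xs := hWb0.trans hWxs
  have hWxs_pos' : 0 < V 0 xs - V 1 xs := by
    rw [hWdef] at hWxs_pos
    simpa using hWxs_pos
  have hrw : 0 < r * (V 0 xs - V 1 xs) := mul_pos hr hWxs_pos'
  linarith [e0, e1, hprod, hrw, hKord]
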